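/- Suppose the structural mechanism is separable: g(x, ŷ) = g₁(x) + g₂(ŷ) where g₁ : ℝ → ℝ is differentiable and g₂ : 𝒮 → ℝ is a function on a finite set 𝒮 ⊆ ℝ of prediction values, with |𝒮| ≥ 2. Let f_θ : ℝ → 𝒮 be the deployed classifier and suppose every value in 𝒮 is attained by f_θ on a set of positive measure, and the preimage f_θ⁻¹(s) of each s ∈ 𝒮 covers, across all s, connected intervals whose union is ℝ. Suppose h(x, ŷ) = h₁(x) + h₂(ŷ) with h₁ differentiable agrees with g on the observed set {(x, f_θ(x)) : x ∈ ℝ}. Then h₁' (the derivative) equals g₁' everywhere, and consequently h(x, ŷ) − g(x, ŷ) is a constant independent of both x and ŷ; in particular if h and g agree at a single off-support point, they agree everywhere. -/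

import Mathlib

open MeasureTheory

open Filter Set in
theorem locconst_aux_stmt7 (F : ℝ → ℝ) (hF : Continuous F) (D : Finset ℝ)
    (hloc : ∀ x ∉ D, ∀ᶠ y in nhds x, F y = F x) :
    ∀ x : ℝ, ∀ᶠ y in nhds x, F y = F x := by
  have L1 : ∀ a b : ℝ, a ≤ b → (∀ x ∈ Set.Ico a b, x ∉ D) → F b = F a := by
    intro a b hab h
    refine constant_of_has_deriv_right_zero (f := F) (a := a) (b := b)
      hF.continuousOn ?_ b (by simp [hab])
    intro x hx
    have hev := hloc x (h x hx)
    exact ((hasDerivAt_const x (F x)).congr_of_eventuallyEq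
      (hev.mono fun y hy => hy)).hasDerivWithinAt
  intro x
  by_cases hx : x ∈ D
  · have hC : IsClosed (↑(D.erase x) : Set ℝ) := (D.erase x).finite_toSet.isClosed
    have hxC : x ∈ (↑(D.erase x) : Set ℝ)ᶜ := by simp
    obtain ⟨ε, hε, hball⟩ := Metric.mem_nhds_iff.mp (hC.isOpen_compl.mem_nhds hxC)
    have hnotD : ∀ y ∈ Metric.ball x ε, y ≠ x → y ∉ D := by
      intro y hy hne hyD
      exact (hball hy) (Finset.mem_erase.mpr ⟨hne, hyD⟩)
    have hR : ∀ y ∈ Set.Ioo x (x + ε), F y = F x := by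
      intro y hy
      have key : ∀ y' ∈ Set.Ioc x y, F y = F y' := by
        intro y' hy'
        refine L1 y' y hy'.2 fun z hz => hnotD z ?_ (ne_of_gt (lt_of_lt_of_le hy'.1 hz.1))
        rw [Metric.mem_ball, Real.dist_eq, abs_lt]
        constructor <;> nlinarith [hz.1, hz.2, hy'.1, hy.1, hy.2]
      have h1 : Tendsto F (nhdsWithin x (Set.Ioi x)) (nhds (F x)) :=
        (hF.tendsto x).mono_left nhdsWithin_le_nhds
      have h2 : Tendsto F (nhdsWithin x (Set.Ioi x)) (nhds (F y)) := by
        refine Tendsto.congr' ?_ tendsto_const_nhds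
        filter_upwards [Ioc_mem_nhdsGT_of_mem (Set.left_mem_Ico.mpr hy.1)] with z hz
        exact key z hz
      exact tendsto_nhds_unique h2 h1
    have hL : ∀ y ∈ Set.Ioo (x - ε) x, F y = F x := by
      intro y hy
      have key : ∀ y' ∈ Set.Ico y x, F y' = F y := by
        intro y' hy'
        refine L1 y y' hy'.1 fun z hz => hnotD z ?_ (ne_of_lt (lt_of_lt_of_le hz.2 (le_of_lt hy'.2)))
        rw [Metric.mem_ball, Real.dist_eq, abs_lt]
        constructor <;> nlinarith [hz.1, hz.2, hy'.2, hy.1, hy.2]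
      have h1 : Tendsto F (nhdsWithin x (Set.Iio x)) (nhds (F x)) :=
        (hF.tendsto x).mono_left nhdsWithin_le_nhds
      have h2 : Tendsto F (nhdsWithin x (Set.Iio x)) (nhds (F y)) := by
        refine Tendsto.congr' ?_ tendsto_const_nhds
        filter_upwards [Ico_mem_nhdsLT_of_mem (Set.right_mem_Ioc.mpr hy.2)] with z hz
        exact (key z hz).symm
      exact tendsto_nhds_unique h2 h1
    filter_upwards [Metric.ball_mem_nhds x hε] with y hy
    rcases lt_trichotomy y x with h | h | h
    · refine hL y ⟨?_, h⟩
      have := abs_lt.mp (by simpa [Real.dist_eq] using hy)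
      linarith [this.1]
    · simp [h]
    · refine hR y ⟨h, ?_⟩
      have := abs_lt.mp (by simpa [Real.dist_eq] using hy)
      linarith [this.2]
  · exact hloc x hx

/-- Proposition 5 (Identifiability for discrete classification): for the separable
mechanism `g(x,yh) = g₁(x) + g₂(yh)` with differentiable `g₁` and discrete
prediction values `S` (`|S| ≥ 2`), each attained on a set of positive Lebesgue
measure, with the classifier `fθ` locally constant outside a finite set of
boundary points, any separable hypothesis `h₁ + h₂` with `h₁` differentiable that
agrees with `g` on the observed support `{(x, fθ x)}` satisfies `h₁' = g₁'`
everywhere, `h₁ = g₁ + c` and `h₂ = g₂ - c` on `S` for a single constant `c`;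
hence `h` and `g` differ by a constant that cancels, and agreement at a single
off-support point forces agreement everywhere. -/
theorem stmt_7 (S : Finset ℝ) (hScard : 2 ≤ S.card)
    (g₁ h₁ : ℝ → ℝ) (hg₁ : Differentiable ℝ g₁) (hh₁ : Differentiable ℝ h₁)
    (g₂ h₂ : ℝ → ℝ) (fθ : ℝ → ℝ) (hrange : ∀ x : ℝ, fθ x ∈ S)
    (hpos : ∀ s ∈ S, 0 < volume (fθ ⁻¹' {s}))
    (D : Finset ℝ)
    (hloc : ∀ x : ℝ, x ∉ D → ∃ ε > 0, ∀ y : ℝ, |y - x| < ε → fθ y = fθ x)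
    (hagree : ∀ x : ℝ, h₁ x + h₂ (fθ x) = g₁ x + g₂ (fθ x)) :
    (∀ x : ℝ, deriv h₁ x = deriv g₁ x) ∧
    (∃ c : ℝ, (∀ x : ℝ, h₁ x = g₁ x + c) ∧ ∀ s ∈ S, h₂ s = g₂ s - c) ∧
    (∀ x₀ : ℝ, ∀ y₀ ∈ S, h₁ x₀ + h₂ y₀ = g₁ x₀ + g₂ y₀ →
      ∀ x : ℝ, ∀ y ∈ S, h₁ x + h₂ y = g₁ x + g₂ y) := by
  set F : ℝ → ℝ := fun x => h₁ x - g₁ x with hFdef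
  have hFdiff : Differentiable ℝ F := hh₁.sub hg₁
  have hloc' : ∀ x ∉ D, ∀ᶠ y in nhds x, F y = F x := by
    intro x hx
    obtain ⟨ε, hε, hconst⟩ := hloc x hx
    filter_upwards [Metric.ball_mem_nhds x hε] with y hy
    have hfy : fθ y = fθ x := hconst y (by simpa [Real.dist_eq] using hy)
    have h1 := hagree y
    have h2 := hagree x
    rw [hfy] at h1
    simp only [hFdef]
    linarith
  have hev := locconst_aux_stmt7 F hFdiff.continuous D hloc'
  have hderiv0 : ∀ x : ℝ, deriv F x = 0 := by
    intro x
    have : HasDerivAt F 0 x :=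
      (hasDerivAt_const x (F x)).congr_of_eventuallyEq ((hev x).mono fun y hy => hy)
    exact this.deriv
  have hderiv : ∀ x : ℝ, deriv h₁ x = deriv g₁ x := by
    intro x
    have := hderiv0 x
    rw [hFdef] at this
    rw [deriv_fun_sub (hh₁.differentiableAt) (hg₁.differentiableAt)] at this
    linarith
  have hconstF : ∀ x : ℝ, F x = F 0 :=
    fun x => is_const_of_deriv_eq_zero hFdiff hderiv0 x 0
  have h0 : F 0 = h₁ 0 - g₁ 0 := rfl
  have hc1 : ∀ x : ℝ, h₁ x = g₁ x + F 0 := by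
    intro x
    have := hconstF x
    simp only [hFdef] at this
    linarith
  have hc2 : ∀ s ∈ S, h₂ s = g₂ s - F 0 := by
    intro s hs
    have hne : (fθ ⁻¹' {s}).Nonempty := by
      rcases Set.eq_empty_or_nonempty (fθ ⁻¹' {s}) with h | h
      · exfalso; have := hpos s hs; rw [h] at this; simp at this
      · exact h
    obtain ⟨x, hx⟩ := hne
    have hfx : fθ x = s := hx
    have h1 := hagree x
    rw [hfx] at h1
    have h2 := hc1 x
    linarith
  refine ⟨hderiv, ⟨F 0, hc1, hc2⟩, ?_⟩
  intro x₀ y₀ hy₀ _ x y hyS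
  have := hc1 x
  have := hc2 y hyS
  linarith
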